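/- Let 0 < λ ≤ 1, a < b, and g : [a,b] → ℂ differentiable with integrable derivative. Then |∫_a^b e^{−ist} (t−a)^{λ−1} g(t) dt| ≤ C_λ (|g(b)| + ∫_a^b |g′(t)| dt) |s|^{−λ} for all s ≠ 0, where C_λ depends only on λ. -/

import Mathlib

open MeasureTheory Set intervalIntegral

noncomputable def Ker (lam s : ℝ) (u : ℝ) : ℂ :=
  Complex.exp (-(Complex.I * s * u)) * ((u ^ (lam - 1) : ℝ) : ℂ)

lemma exp_norm (s u : ℝ) : ‖Complex.exp (-(Complex.I * s * u))‖ = 1 := by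
  rw [Complex.norm_exp]
  simp [Complex.mul_re]

lemma ker_norm (lam s u : ℝ) : ‖Ker lam s u‖ = |u ^ (lam - 1)| := by
  rw [Ker, norm_mul, exp_norm, one_mul, Complex.norm_real, Real.norm_eq_abs]

lemma rpowC_integrable {lam : ℝ} (h0 : 0 < lam) (a b : ℝ) :
    IntervalIntegrable (fun u : ℝ => ((u ^ (lam - 1) : ℝ) : ℂ)) volume a b := by
  have h := intervalIntegrable_rpow' (a := a) (b := b) (r := lam - 1) (by linarith)
  exact ⟨h.1.ofReal, h.2.ofReal⟩

lemma ker_integrable {lam : ℝ} (h0 : 0 < lam) (s a b : ℝ) :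
    IntervalIntegrable (Ker lam s) volume a b := by
  refine (rpowC_integrable h0 a b).continuousOn_mul ?_
  exact (Complex.continuous_exp.comp (by continuity)).continuousOn

lemma small_bound {lam : ℝ} (h0 : 0 < lam) (s L : ℝ) (hL : 0 ≤ L) :
    ‖∫ u in (0:ℝ)..L, Ker lam s u‖ ≤ L ^ lam / lam := by
  have h2 : (∫ u in (0:ℝ)..L, ‖Ker lam s u‖) = ∫ u in (0:ℝ)..L, u ^ (lam - 1) := by
    apply integral_congr
    intro u hu
    rw [uIcc_of_le hL] at hu
    show ‖Ker lam s u‖ = u ^ (lam - 1)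
    rw [ker_norm, abs_of_nonneg (Real.rpow_nonneg hu.1 _)]
  calc ‖∫ u in (0:ℝ)..L, Ker lam s u‖ ≤ ∫ u in (0:ℝ)..L, ‖Ker lam s u‖ :=
        norm_integral_le_integral_norm hL
    _ = ∫ u in (0:ℝ)..L, u ^ (lam - 1) := h2
    _ = L ^ lam / lam := by
        rw [integral_rpow (Or.inl (by linarith))]
        rw [sub_add_cancel, Real.zero_rpow h0.ne', sub_zero]

lemma model_bound {lam : ℝ} (h0 : 0 < lam) (h1 : lam ≤ 1) {s : ℝ} (hs : s ≠ 0)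
    {L : ℝ} (hL : 0 ≤ L) :
    ‖∫ u in (0:ℝ)..L, Ker lam s u‖ ≤ (1 / lam + 3) * |s| ^ (-lam) := by
  have hsa : (0:ℝ) < |s| := abs_pos.mpr hs
  set ε : ℝ := |s|⁻¹ with hε_def
  have hε : 0 < ε := inv_pos.mpr hsa
  have hP : (0:ℝ) ≤ |s| ^ (-lam) := Real.rpow_nonneg hsa.le _
  have key : |s|⁻¹ * ε ^ (lam - 1) = |s| ^ (-lam) := by
    rw [hε_def, Real.inv_rpow hsa.le, ← Real.rpow_neg hsa.le, ← Real.rpow_neg_one |s|,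
      ← Real.rpow_add hsa]
    congr 1; ring
  have hεpow : ε ^ lam = |s| ^ (-lam) := by
    rw [hε_def, Real.inv_rpow hsa.le, ← Real.rpow_neg hsa.le]
  rcases le_or_gt L ε with hcase | hcase
  · have b1 := small_bound h0 s L hL
    have b2 : L ^ lam ≤ ε ^ lam := Real.rpow_le_rpow hL hcase h0.le
    rw [hεpow] at b2
    calc ‖∫ u in (0:ℝ)..L, Ker lam s u‖ ≤ L ^ lam / lam := b1
      _ ≤ |s| ^ (-lam) / lam := by gcongr
      _ = (1 / lam) * |s| ^ (-lam) := by ring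
      _ ≤ (1 / lam + 3) * |s| ^ (-lam) := by nlinarith [hP]
  · have hεL : ε ≤ L := hcase.le
    set c : ℂ := -(Complex.I * s) with hc
    have hc0 : c ≠ 0 := by
      simp only [hc, neg_ne_zero]
      exact mul_ne_zero Complex.I_ne_zero (Complex.ofReal_ne_zero.mpr hs)
    have hcu : ∀ u : ℝ, c * (u : ℂ) = -(Complex.I * s * u) := fun u => by rw [hc]; ring
    set E : ℝ → ℂ := fun u => Complex.exp (c * u) / c * (((lam - 1) * u ^ (lam - 2) : ℝ) : ℂ)
      with hE
    set H : ℝ → ℂ := fun u => Complex.exp (c * u) / c * ((u ^ (lam - 1) : ℝ) : ℂ) with hH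
    have hnormc : ‖c‖ = |s| := by
      rw [hc, norm_neg, norm_mul, Complex.norm_I,
        one_mul, Complex.norm_real, Real.norm_eq_abs]
    have hnexp : ∀ u : ℝ, ‖Complex.exp (c * u)‖ = 1 := fun u => by rw [hcu]; exact exp_norm s u
    have hderH : ∀ u ∈ Set.Icc ε L,
        HasDerivAt H (Ker lam s u + E u) u := by
      intro u hu
      have hu0 : 0 < u := lt_of_lt_of_le hε hu.1
      have d1 : HasDerivAt (fun u : ℝ => Complex.exp (c * u)) (c * Complex.exp (c * u)) u := by
        have dd : HasDerivAt (fun u : ℝ => c * (u : ℂ)) c u := by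
          simpa using ((hasDerivAt_id u).ofReal_comp).const_mul c
        simpa [mul_comm] using dd.cexp
      have d2 : HasDerivAt (fun u : ℝ => ((u ^ (lam - 1) : ℝ) : ℂ))
          (((lam - 1) * u ^ (lam - 2) : ℝ) : ℂ) u := by
        have := Real.hasDerivAt_rpow_const (x := u) (p := lam - 1) (Or.inl hu0.ne')
        rw [show lam - 1 - 1 = lam - 2 by ring] at this
        exact this.ofReal_comp
      have := (d1.div_const c).mul d2
      refine this.congr_deriv (Eq.symm ?_)
      rw [Ker, hE, ← hcu u]
      field_simp
      try ring
    have hEcont : ContinuousOn E (Set.uIcc ε L) := by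
      rw [uIcc_of_le hεL]
      apply ContinuousOn.mul (Continuous.continuousOn (by continuity))
      apply Complex.continuous_ofReal.comp_continuousOn
      apply ContinuousOn.mul continuousOn_const
      exact ContinuousOn.rpow_const continuousOn_id
        (fun x hx => Or.inl (ne_of_gt (lt_of_lt_of_le hε hx.1)))
    have hEint : IntervalIntegrable E volume ε L := hEcont.intervalIntegrable
    have hibp : (∫ u in ε..L, (Ker lam s u + E u)) = H L - H ε := by
      apply integral_eq_sub_of_hasDerivAt
      · intro u hu
        exact hderH u (by rwa [uIcc_of_le hεL] at hu)
      · exact (ker_integrable h0 s ε L).add hEint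
    have hsplit2 : (∫ u in ε..L, Ker lam s u) = H L - H ε - ∫ u in ε..L, E u := by
      rw [← hibp, integral_add (ker_integrable h0 s ε L) hEint]; ring
    -- norms of H
    have hHnorm : ∀ u : ℝ, 0 < u → ‖H u‖ = |s|⁻¹ * u ^ (lam - 1) := by
      intro u hu
      rw [hH]
      show ‖Complex.exp (c * u) / c * ((u ^ (lam - 1) : ℝ) : ℂ)‖ = _
      rw [norm_mul, norm_div, hnexp, hnormc, Complex.norm_real, Real.norm_eq_abs,
        abs_of_nonneg (Real.rpow_nonneg hu.le _), one_div]
    have hHL : ‖H L‖ ≤ |s| ^ (-lam) := by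
      rw [hHnorm L (lt_of_lt_of_le hε hεL), ← key]
      exact mul_le_mul_of_nonneg_left
        (Real.rpow_le_rpow_of_nonpos hε hεL (by linarith)) (inv_nonneg.mpr hsa.le)
    have hHε : ‖H ε‖ ≤ |s| ^ (-lam) := by
      rw [hHnorm ε hε, key]
    have hEbnd : ‖∫ u in ε..L, E u‖ ≤ |s| ^ (-lam) := by
      rcases eq_or_lt_of_le h1 with rfl | hlt
      · have : ∀ u : ℝ, E u = 0 := by
          intro u; rw [hE]; show Complex.exp (c * u) / c * (((1 - 1) * u ^ (1 - 2) : ℝ) : ℂ) = 0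
          norm_num
        simp only [this]
        rw [intervalIntegral.integral_zero]
        simpa using hP
      · have hEnorm : (∫ u in ε..L, ‖E u‖) = ∫ u in ε..L, |s|⁻¹ * ((1 - lam) * u ^ (lam - 2)) := by
          apply integral_congr
          intro u hu
          rw [uIcc_of_le hεL] at hu
          have hu0 : 0 < u := lt_of_lt_of_le hε hu.1
          show ‖E u‖ = _
          rw [hE]
          show ‖Complex.exp (c * u) / c * (((lam - 1) * u ^ (lam - 2) : ℝ) : ℂ)‖ = _
          rw [norm_mul, norm_div, hnexp, hnormc, Complex.norm_real, Real.norm_eq_abs, one_div,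
            abs_mul, abs_of_nonneg (Real.rpow_nonneg hu0.le _),
            abs_of_nonpos (by linarith : lam - 1 ≤ 0)]
          ring
        have hint : (∫ u in ε..L, u ^ (lam - 2)) = (L ^ (lam - 1) - ε ^ (lam - 1)) / (lam - 1) := by
          rw [integral_rpow (Or.inr ⟨by intro hcon; apply hlt.ne; linarith, by
            rw [uIcc_of_le hεL]; intro hcon; exact absurd hcon.1 (not_le.mpr hε)⟩)]
          rw [show lam - 2 + 1 = lam - 1 by ring]
        calc ‖∫ u in ε..L, E u‖ ≤ ∫ u in ε..L, ‖E u‖ := norm_integral_le_integral_norm hεL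
          _ = ∫ u in ε..L, |s|⁻¹ * ((1 - lam) * u ^ (lam - 2)) := hEnorm
          _ = |s|⁻¹ * (1 - lam) * ((L ^ (lam - 1) - ε ^ (lam - 1)) / (lam - 1)) := by
              rw [show (fun u : ℝ => |s|⁻¹ * ((1 - lam) * u ^ (lam - 2)))
                  = fun u : ℝ => (|s|⁻¹ * (1 - lam)) * u ^ (lam - 2) by funext u; ring,
                intervalIntegral.integral_const_mul, hint]
          _ = |s|⁻¹ * (ε ^ (lam - 1) - L ^ (lam - 1)) := by
              have h1m : lam - 1 ≠ 0 := by intro hcon; apply hlt.ne; linarith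
              field_simp
              ring
          _ ≤ |s|⁻¹ * ε ^ (lam - 1) := by
              apply mul_le_mul_of_nonneg_left _ (inv_nonneg.mpr hsa.le)
              have := Real.rpow_nonneg (le_of_lt (lt_of_lt_of_le hε hεL)) (lam - 1)
              linarith
          _ = |s| ^ (-lam) := key
    have hsplit : (∫ u in (0:ℝ)..L, Ker lam s u)
        = (∫ u in (0:ℝ)..ε, Ker lam s u) + ∫ u in ε..L, Ker lam s u :=
      (integral_add_adjacent_intervals (ker_integrable h0 s 0 ε) (ker_integrable h0 s ε L)).symm
    have bsmall : ‖∫ u in (0:ℝ)..ε, Ker lam s u‖ ≤ (1 / lam) * |s| ^ (-lam) := by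
      calc ‖∫ u in (0:ℝ)..ε, Ker lam s u‖ ≤ ε ^ lam / lam := small_bound h0 s ε hε.le
        _ = (1 / lam) * |s| ^ (-lam) := by rw [hεpow]; ring
    calc ‖∫ u in (0:ℝ)..L, Ker lam s u‖
        ≤ ‖∫ u in (0:ℝ)..ε, Ker lam s u‖ + ‖∫ u in ε..L, Ker lam s u‖ := by
          rw [hsplit]; exact norm_add_le _ _
      _ ≤ (1 / lam) * |s| ^ (-lam) + (‖H L‖ + ‖H ε‖ + ‖∫ u in ε..L, E u‖) := by
          apply add_le_add bsmall
          rw [hsplit2]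
          calc ‖H L - H ε - ∫ u in ε..L, E u‖ ≤ ‖H L - H ε‖ + ‖∫ u in ε..L, E u‖ :=
                norm_sub_le _ _
            _ ≤ ‖H L‖ + ‖H ε‖ + ‖∫ u in ε..L, E u‖ := by
                have := norm_sub_le (H L) (H ε); linarith
      _ ≤ (1 / lam + 3) * |s| ^ (-lam) := by nlinarith [hHL, hHε, hEbnd]

lemma shifted_bound {lam : ℝ} (h0 : 0 < lam) (h1 : lam ≤ 1) {s : ℝ} (hs : s ≠ 0)
    (a u : ℝ) (hau : a ≤ u) :
    ‖∫ t in a..u, Complex.exp (-(Complex.I * s * t)) * (((t - a) ^ (lam - 1) : ℝ) : ℂ)‖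
      ≤ (1 / lam + 3) * |s| ^ (-lam) := by
  have hshift : (∫ t in a..u, Complex.exp (-(Complex.I * s * t)) * (((t - a) ^ (lam - 1) : ℝ) : ℂ))
      = Complex.exp (-(Complex.I * s * a)) * ∫ x in (0:ℝ)..(u - a), Ker lam s x := by
    rw [← intervalIntegral.integral_const_mul]
    have hcomp := intervalIntegral.integral_comp_add_right (a := 0) (b := u - a)
      (fun t => Complex.exp (-(Complex.I * s * t)) * (((t - a) ^ (lam - 1) : ℝ) : ℂ)) a
    simp only [zero_add, sub_add_cancel] at hcomp
    rw [← hcomp]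
    apply integral_congr
    intro x hx
    show Complex.exp (-(Complex.I * s * ((x + a : ℝ) : ℂ))) * (((x + a - a) ^ (lam - 1) : ℝ) : ℂ)
        = Complex.exp (-(Complex.I * s * a)) * Ker lam s x
    rw [Ker, ← mul_assoc, ← Complex.exp_add, show (x : ℝ) + a - a = x by ring]
    congr 2
    push_cast
    ring
  rw [hshift, norm_mul, exp_norm, one_mul]
  exact model_bound h0 h1 hs (by linarith)

theorem stmt11 (lam : ℝ) (h0 : 0 < lam) (h1 : lam ≤ 1) :
    ∃ C > 0, ∀ (a b : ℝ), a < b → ∀ (g g' : ℝ → ℂ),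
      (∀ t ∈ Set.Icc a b, HasDerivWithinAt g (g' t) (Set.Icc a b) t) →
      IntervalIntegrable g' volume a b →
      ∀ s : ℝ, s ≠ 0 →
        ‖∫ t in a..b,
            Complex.exp (-(Complex.I * s * t)) * (((t - a) ^ (lam - 1) : ℝ) : ℂ) * g t‖ ≤
          C * (‖g b‖ + ∫ t in a..b, ‖g' t‖) * |s| ^ (-lam) := by
  refine ⟨1 / lam + 3, by positivity, ?_⟩
  intro a b hab g g' hg hg' s hs
  set C1 : ℝ := (1 / lam + 3) * |s| ^ (-lam) with hC1
  set K : ℝ → ℂ := fun t => Complex.exp (-(Complex.I * s * t)) * (((t - a) ^ (lam - 1) : ℝ) : ℂ)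
    with hK
  have hKint : ∀ u v : ℝ, IntervalIntegrable K volume u v := by
    intro u v
    have h := intervalIntegrable_rpow' (a := u - a) (b := v - a) (r := lam - 1) (by linarith)
    have h2 := h.comp_sub_right a
    simp only [sub_add_cancel] at h2
    have h3 : IntervalIntegrable (fun t : ℝ => (((t - a) ^ (lam - 1) : ℝ) : ℂ)) volume u v :=
      ⟨h2.1.ofReal, h2.2.ofReal⟩
    exact h3.continuousOn_mul (Complex.continuous_exp.comp (by continuity)).continuousOn
  set F : ℝ → ℂ := fun u => ∫ t in a..u, K t with hF
  have hFbound : ∀ u, a ≤ u → ‖F u‖ ≤ C1 := fun u hu => shifted_bound h0 h1 hs a u hu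
  have hgcont : ContinuousOn g (Set.Icc a b) := fun t ht => (hg t ht).continuousWithinAt
  have hFcont : ContinuousOn F (Set.Icc a b) := by
    rw [← uIcc_of_le hab.le]
    exact continuousOn_primitive_interval' (hKint a b) left_mem_uIcc
  have hderiv : ∀ x ∈ Set.Ioo a b,
      HasDerivWithinAt (fun t => F t * g t) (K x * g x + F x * g' x) (Set.Ioi x) x := by
    intro x hx
    have hxa : a < x := hx.1
    have hKcont : ContinuousAt K x := by
      apply ContinuousAt.mul
      · exact (Complex.continuous_exp.comp (by continuity)).continuousAt
      · apply Complex.continuous_ofReal.continuousAt.comp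
        exact ((continuous_id.sub continuous_const).continuousAt).rpow_const
          (Or.inl (sub_ne_zero.mpr hxa.ne'))
    have hKcontOn : ∀ y ∈ Set.Ioi a, ContinuousAt K y := by
      intro y hy
      apply ContinuousAt.mul
      · exact (Complex.continuous_exp.comp (by continuity)).continuousAt
      · apply Complex.continuous_ofReal.continuousAt.comp
        exact ((continuous_id.sub continuous_const).continuousAt).rpow_const
          (Or.inl (sub_ne_zero.mpr (ne_of_gt hy)))
    have hFd : HasDerivAt F (K x) x :=
      intervalIntegral.integral_hasDerivAt_right (hKint a x)
        (ContinuousAt.stronglyMeasurableAtFilter isOpen_Ioi hKcontOn x hxa) hKcont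
    have hgd : HasDerivAt g (g' x) x :=
      (hg x (Set.mem_Icc.mpr ⟨hx.1.le, hx.2.le⟩)).hasDerivAt (Icc_mem_nhds hx.1 hx.2)
    exact (hFd.mul hgd).hasDerivWithinAt
  have hKgint : IntervalIntegrable (fun t => K t * g t) volume a b :=
    (hKint a b).mul_continuousOn (by rwa [uIcc_of_le hab.le])
  have hFg'int : IntervalIntegrable (fun t => F t * g' t) volume a b :=
    hg'.continuousOn_mul (by rwa [uIcc_of_le hab.le])
  have hcontFg : ContinuousOn (fun t => F t * g t) (Set.Icc a b) := hFcont.mul hgcont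
  have heq : (∫ t in a..b, (K t * g t + F t * g' t)) = F b * g b - F a * g a := by
    have := intervalIntegral.integral_eq_sub_of_hasDeriv_right_of_le hab.le hcontFg
      hderiv (hKgint.add hFg'int)
    simpa using this
  have hFa : F a = 0 := intervalIntegral.integral_same
  have hmain : (∫ t in a..b, K t * g t) = F b * g b - ∫ t in a..b, F t * g' t := by
    rw [intervalIntegral.integral_add hKgint hFg'int, hFa] at heq
    linear_combination heq
  have hC1nn : 0 ≤ C1 := by positivity
  have hFg'bnd : ‖∫ t in a..b, F t * g' t‖ ≤ C1 * ∫ t in a..b, ‖g' t‖ := by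
    calc ‖∫ t in a..b, F t * g' t‖ ≤ ∫ t in a..b, ‖F t * g' t‖ :=
          intervalIntegral.norm_integral_le_integral_norm hab.le
      _ ≤ ∫ t in a..b, C1 * ‖g' t‖ := by
          apply intervalIntegral.integral_mono_on hab.le hFg'int.norm
            (hg'.norm.const_mul C1)
          intro t ht
          rw [norm_mul]
          exact mul_le_mul_of_nonneg_right (hFbound t ht.1) (norm_nonneg _)
      _ = C1 * ∫ t in a..b, ‖g' t‖ := intervalIntegral.integral_const_mul _ _
  have hfinal : ‖∫ t in a..b, K t * g t‖ ≤ C1 * ‖g b‖ + C1 * ∫ t in a..b, ‖g' t‖ := by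
    rw [hmain]
    calc ‖F b * g b - ∫ t in a..b, F t * g' t‖
        ≤ ‖F b * g b‖ + ‖∫ t in a..b, F t * g' t‖ := norm_sub_le _ _
      _ ≤ C1 * ‖g b‖ + C1 * ∫ t in a..b, ‖g' t‖ := by
          apply add_le_add _ hFg'bnd
          rw [norm_mul]
          exact mul_le_mul_of_nonneg_right (hFbound b hab.le) (norm_nonneg _)
  have : (∫ t in a..b,
      Complex.exp (-(Complex.I * s * t)) * (((t - a) ^ (lam - 1) : ℝ) : ℂ) * g t)
      = ∫ t in a..b, K t * g t := by rfl
  rw [this]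
  calc ‖∫ t in a..b, K t * g t‖ ≤ C1 * ‖g b‖ + C1 * ∫ t in a..b, ‖g' t‖ := hfinal
    _ = (1 / lam + 3) * (‖g b‖ + ∫ t in a..b, ‖g' t‖) * |s| ^ (-lam) := by rw [hC1]; ring
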